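/- Let H and A be Hopf algebras over a field, with A finite dimensional, and suppose A is a right H-module bialgebra (the action is compatible with both multiplication and comultiplication and the counit). Let h be a left cointegral of A with h ◁ a = ρ(a) h, and k a right cointegral with k ◁ a = η(a) k. Then ρ = η. -/

import Mathlib

open TensorProduct

namespace Stmt7Aux

variable {K : Type*} [Field K]

theorem exists_fin_pres {M N : Type*} [AddCommGroup M] [AddCommGroup N]
    [Module K M] [Module K N] (z : M ⊗[K] N) :
    ∃ (n : ℕ) (f : Fin n → M) (g : Fin n → N), z = ∑ i, f i ⊗ₜ[K] g i := by
  induction z using TensorProduct.induction_on with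
  | zero => exact ⟨0, ![], ![], by simp⟩
  | tmul x y => exact ⟨1, ![x], ![y], by simp⟩
  | add x y hx hy =>
      obtain ⟨n, f, g, rfl⟩ := hx
      obtain ⟨n', f', g', rfl⟩ := hy
      refine ⟨n + n', Fin.append f f', Fin.append g g', ?_⟩
      rw [Fin.sum_univ_add]
      simp [Fin.append_left, Fin.append_right]

section Coalg

variable {A : Type*} [AddCommGroup A] [Module K A] [Coalgebra K A]

/-- From a Fin-indexed presentation of `comul x`, recover `x` by applying counit to the left leg. -/
theorem sum_counit_left_smul {x : A} {n : ℕ} {x1 x2 : Fin n → A}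
    (hx : Coalgebra.comul (R := K) x = ∑ i, x1 i ⊗ₜ[K] x2 i) :
    ∑ i, Coalgebra.counit (R := K) (x1 i) • x2 i = x := by
  have h := Coalgebra.rTensor_counit_comul (R := K) x
  rw [hx, map_sum] at h
  have := congrArg (TensorProduct.lid K A) h
  simpa using this

theorem sum_counit_right_smul {x : A} {n : ℕ} {x1 x2 : Fin n → A}
    (hx : Coalgebra.comul (R := K) x = ∑ i, x1 i ⊗ₜ[K] x2 i) :
    ∑ i, Coalgebra.counit (R := K) (x2 i) • x1 i = x := by
  have h := Coalgebra.lTensor_counit_comul (R := K) x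
  rw [hx, map_sum] at h
  have := congrArg (TensorProduct.rid K A) h
  simpa using this

/-- Repackage a Fin presentation as a `Coalgebra.Repr`. -/
def finRepr {x : A} {n : ℕ} {x1 x2 : Fin n → A}
    (hx : Coalgebra.comul (R := K) x = ∑ i, x1 i ⊗ₜ[K] x2 i) : Coalgebra.Repr K x (Fin n) :=
  Coalgebra.Repr.mk (Finset.univ : Finset (Fin n)) x1 x2 hx.symm

end Coalg

section Gadget

variable {A : Type*} [Ring A] [Algebra K A]
variable {M N P : Type*} [AddCommGroup M] [Module K M] [AddCommGroup N] [Module K N]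
  [AddCommGroup P] [Module K P]

/-- Trilinear multiplication gadget. -/
noncomputable def mulTri (f : M →ₗ[K] A) (g : N →ₗ[K] A) (h : P →ₗ[K] A) :
    M ⊗[K] (N ⊗[K] P) →ₗ[K] A :=
  LinearMap.mul' K A ∘ₗ map f (LinearMap.mul' K A ∘ₗ map g h)

@[simp] theorem mulTri_tmul (f : M →ₗ[K] A) (g : N →ₗ[K] A) (h : P →ₗ[K] A)
    (x : M) (y : N) (z : P) :
    mulTri f g h (x ⊗ₜ[K] (y ⊗ₜ[K] z)) = f x * (g y * h z) := by
  simp [mulTri]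

/-- Contract the left factor with a functional. -/
noncomputable def contrL (f : M →ₗ[K] K) : M ⊗[K] N →ₗ[K] N :=
  (TensorProduct.lid K N).toLinearMap ∘ₗ f.rTensor N

@[simp] theorem contrL_tmul (f : M →ₗ[K] K) (x : M) (y : N) :
    contrL f (x ⊗ₜ[K] y) = f x • y := by simp [contrL]

/-- Contract the right factor with a functional. -/
noncomputable def contrR (f : N →ₗ[K] K) : M ⊗[K] N →ₗ[K] M :=
  (TensorProduct.rid K M).toLinearMap ∘ₗ f.lTensor M

@[simp] theorem contrR_tmul (f : N →ₗ[K] K) (x : M) (y : N) :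
    contrR f (x ⊗ₜ[K] y) = f y • x := by simp [contrR]

end Gadget



variable {K A H : Type*} [Field K]
    [Ring A] [HopfAlgebra K A]
    [Ring H] [HopfAlgebra K H]
    (act : A ⊗[K] H →ₗ[K] A)

/-- `x ↦ x ◁ c` as a linear map. -/
noncomputable def actR (c : H) : A →ₗ[K] A := act ∘ₗ (TensorProduct.mk K A H).flip c

@[simp] theorem actR_apply (c : H) (x : A) : actR act c x = act (x ⊗ₜ[K] c) := rfl

/-- `c ↦ x ◁ c` as a linear map. -/
noncomputable def actL (x : A) : H →ₗ[K] A := act ∘ₗ TensorProduct.mk K A H x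

@[simp] theorem actL_apply (x : A) (c : H) : actL act x c = act (x ⊗ₜ[K] c) := rfl

theorem one_act
    (act_alg : ∀ (b b' : A) (a : H) (n : ℕ) (a₁ a₂ : Fin n → H),
      Coalgebra.comul (R := K) a = ∑ i, a₁ i ⊗ₜ[K] a₂ i →
      act ((b * b') ⊗ₜ[K] a) = ∑ i, act (b ⊗ₜ[K] a₁ i) * act (b' ⊗ₜ[K] a₂ i))
    (act_comul : ∀ (b : A) (a : H) (n : ℕ) (a₁ a₂ : Fin n → H) (m : ℕ) (b₁ b₂ : Fin m → A),
      Coalgebra.comul (R := K) a = ∑ i, a₁ i ⊗ₜ[K] a₂ i →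
      Coalgebra.comul (R := K) b = ∑ j, b₁ j ⊗ₜ[K] b₂ j →
      Coalgebra.comul (R := K) (act (b ⊗ₜ[K] a)) =
        ∑ j, ∑ i, act (b₁ j ⊗ₜ[K] a₁ i) ⊗ₜ[K] act (b₂ j ⊗ₜ[K] a₂ i))
    (act_counit : ∀ (b : A) (a : H),
      Coalgebra.counit (R := K) (act (b ⊗ₜ[K] a)) =
        Coalgebra.counit (R := K) b * Coalgebra.counit (R := K) a)
    (a : H) :
    act ((1 : A) ⊗ₜ[K] a) = Coalgebra.counit (R := K) a • (1 : A) := by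
  classical
  obtain ⟨n, a1, a2, ha⟩ := exists_fin_pres (K := K) (Coalgebra.comul (R := K) a)
  have hcomul1 : Coalgebra.comul (R := K) (1 : A) =
      ∑ _i : Fin 1, (1 : A) ⊗ₜ[K] (1 : A) := by
    simp [map_one (Bialgebra.comulAlgHom K A), Algebra.TensorProduct.one_def]
  -- presentations of the second-level comultiplications
  choose p e f he using fun i => exists_fin_pres (K := K) (Coalgebra.comul (R := K) (a1 i))
  choose q g g' hg using fun i => exists_fin_pres (K := K) (Coalgebra.comul (R := K) (a2 i))
  set u : H →ₗ[K] A := actL act 1 with hu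
  rw [show act ((1 : A) ⊗ₜ[K] a) = u a from rfl]
  -- comul of u c, for c among the a1 i
  have hcom : ∀ (c : H) (nc : ℕ) (c1 c2 : Fin nc → H),
      Coalgebra.comul (R := K) c = ∑ i, c1 i ⊗ₜ[K] c2 i →
      Coalgebra.comul (R := K) (u c) = ∑ i, u (c1 i) ⊗ₜ[K] u (c2 i) := by
    intro c nc c1 c2 hc
    have := act_comul 1 c nc c1 c2 1 (fun _ => 1) (fun _ => 1) hc hcomul1
    simpa [hu] using this
  -- step B : ε(a1 i) • 1 = ∑_j S (u (e i j)) * u (f i j)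
  have stepB : ∀ i, (Coalgebra.counit (R := K) (a1 i)) • (1 : A) =
      ∑ j, HopfAlgebra.antipode (R := K) (u (e i j)) * u (f i j) := by
    intro i
    have hrep := hcom (a1 i) (p i) (e i) (f i) (he i)
    have h2 := HopfAlgebra.sum_antipode_mul_eq_smul (R := K)
      (finRepr (x := u (a1 i)) (x1 := fun j => u (e i j)) (x2 := fun j => u (f i j)) hrep)
    simp only [finRepr] at h2
    have hcnt : Coalgebra.counit (R := K) (u (a1 i)) = Coalgebra.counit (R := K) (a1 i) := by
      simp [hu, act_counit, Bialgebra.counit_one]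
    rw [hcnt] at h2
    exact h2.symm
  -- step A : u a = ∑ i, ε(a1 i) • u (a2 i)
  have stepA : u a = ∑ i, Coalgebra.counit (R := K) (a1 i) • u (a2 i) := by
    conv_lhs => rw [← sum_counit_left_smul (K := K) ha]
    simp [map_sum]
  -- the big regrouping map
  set T : H ⊗[K] (H ⊗[K] H) →ₗ[K] A := mulTri ((HopfAlgebra.antipode (R := K)) ∘ₗ u) u u with hT
  have key : u a = T (∑ i, ∑ j, e i j ⊗ₜ[K] (f i j ⊗ₜ[K] a2 i)) := by
    rw [stepA]
    rw [map_sum]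
    refine Finset.sum_congr rfl fun i _ => ?_
    rw [map_sum]
    have : Coalgebra.counit (R := K) (a1 i) • u (a2 i) =
        ((Coalgebra.counit (R := K) (a1 i)) • (1 : A)) * u (a2 i) := by
      rw [smul_mul_assoc, one_mul]
    rw [this, stepB i, Finset.sum_mul]
    refine Finset.sum_congr rfl fun j _ => ?_
    simp [hT, mul_assoc]
  -- coassociativity regrouping
  have coassoc := Coalgebra.sum_tmul_tmul_eq (R := K) (finRepr (K := K) ha)
      (fun i => finRepr (K := K) (he i)) (fun i => finRepr (K := K) (hg i))
  simp only [finRepr] at coassoc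
  rw [coassoc] at key
  -- now collapse the right-hand side
  rw [map_sum] at key
  have key2 : u a = ∑ i, HopfAlgebra.antipode (R := K) (u (a1 i)) * u (a2 i) := by
    rw [key]
    refine Finset.sum_congr rfl fun i _ => ?_
    rw [map_sum]
    have : ∀ j, T (a1 i ⊗ₜ[K] (g i j ⊗ₜ[K] g' i j)) =
        HopfAlgebra.antipode (R := K) (u (a1 i)) * (u (g i j) * u (g' i j)) := by
      intro j; simp [hT]
    rw [Finset.sum_congr rfl fun j _ => this j, ← Finset.mul_sum]
    congr 1
    have := act_alg 1 1 (a2 i) (q i) (g i) (g' i) (hg i)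
    simpa [hu] using this.symm
  -- antipode law for u a
  have hrepa := hcom a n a1 a2 ha
  have := HopfAlgebra.sum_antipode_mul_eq_smul (R := K)
    (finRepr (x := u a) (x1 := fun i => u (a1 i)) (x2 := fun i => u (a2 i)) hrepa)
  simp only [finRepr] at this
  rw [key2, this]
  simp [hu, act_counit, Bialgebra.counit_one]


theorem antipode_act
    (act_alg : ∀ (b b' : A) (a : H) (n : ℕ) (a₁ a₂ : Fin n → H),
      Coalgebra.comul (R := K) a = ∑ i, a₁ i ⊗ₜ[K] a₂ i →
      act ((b * b') ⊗ₜ[K] a) = ∑ i, act (b ⊗ₜ[K] a₁ i) * act (b' ⊗ₜ[K] a₂ i))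
    (act_comul : ∀ (b : A) (a : H) (n : ℕ) (a₁ a₂ : Fin n → H) (m : ℕ) (b₁ b₂ : Fin m → A),
      Coalgebra.comul (R := K) a = ∑ i, a₁ i ⊗ₜ[K] a₂ i →
      Coalgebra.comul (R := K) b = ∑ j, b₁ j ⊗ₜ[K] b₂ j →
      Coalgebra.comul (R := K) (act (b ⊗ₜ[K] a)) =
        ∑ j, ∑ i, act (b₁ j ⊗ₜ[K] a₁ i) ⊗ₜ[K] act (b₂ j ⊗ₜ[K] a₂ i))
    (act_counit : ∀ (b : A) (a : H),
      Coalgebra.counit (R := K) (act (b ⊗ₜ[K] a)) =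
        Coalgebra.counit (R := K) b * Coalgebra.counit (R := K) a)
    (b : A) (a : H) :
    act (HopfAlgebra.antipode (R := K) b ⊗ₜ[K] a) =
      HopfAlgebra.antipode (R := K) (act (b ⊗ₜ[K] a)) := by
  classical
  set SA : A →ₗ[K] A := HopfAlgebra.antipode (R := K) with hSA
  obtain ⟨m, b1, b2, hb⟩ := exists_fin_pres (K := K) (Coalgebra.comul (R := K) b)
  obtain ⟨n, a1, a2, ha⟩ := exists_fin_pres (K := K) (Coalgebra.comul (R := K) a)
  choose pb eb fb heb using fun j => exists_fin_pres (K := K) (Coalgebra.comul (R := K) (b1 j))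
  choose qb gb g'b hgb using fun j => exists_fin_pres (K := K) (Coalgebra.comul (R := K) (b2 j))
  choose pa ea fa hea using fun i => exists_fin_pres (K := K) (Coalgebra.comul (R := K) (a1 i))
  choose qa ga g'a hga using fun i => exists_fin_pres (K := K) (Coalgebra.comul (R := K) (a2 i))
  -- step 1 : expand both legs by counit
  have step1 : act (SA b ⊗ₜ[K] a) =
      ∑ j, ∑ i, Coalgebra.counit (R := K) (b2 j) •
        (Coalgebra.counit (R := K) (a2 i) • act (SA (b1 j) ⊗ₜ[K] a1 i)) := by
    conv_lhs => rw [← sum_counit_right_smul (K := K) hb, ← sum_counit_right_smul (K := K) ha]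
    rw [map_sum, sum_tmul, map_sum]
    refine Finset.sum_congr rfl fun j _ => ?_
    rw [tmul_sum, map_sum]
    refine Finset.sum_congr rfl fun i _ => ?_
    simp only [map_smul, tmul_smul, ← smul_tmul']
    rw [smul_comm]
  -- step 2 : the counit scalars written via the antipode of A
  have step2 : ∀ j i, Coalgebra.counit (R := K) (b2 j) •
        (Coalgebra.counit (R := K) (a2 i) • (1 : A)) =
      ∑ j' : Fin (qb j), ∑ i' : Fin (qa i),
        act (gb j j' ⊗ₜ[K] ga i i') * SA (act (g'b j j' ⊗ₜ[K] g'a i i')) := by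
    intro j i
    have hcm := act_comul (b2 j) (a2 i) (qa i) (ga i) (g'a i) (qb j) (gb j) (g'b j)
      (hga i) (hgb j)
    have hrep : ∑ z : Fin (qb j) × Fin (qa i),
        act (gb j z.1 ⊗ₜ[K] ga i z.2) ⊗ₜ[K] act (g'b j z.1 ⊗ₜ[K] g'a i z.2) =
        Coalgebra.comul (R := K) (act (b2 j ⊗ₜ[K] a2 i)) := by
      rw [hcm, Fintype.sum_prod_type]
    have h2 := HopfAlgebra.sum_mul_antipode_eq_smul (R := K)
      (Coalgebra.Repr.mk (Finset.univ : Finset (Fin (qb j) × Fin (qa i)))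
        (fun z => act (gb j z.1 ⊗ₜ[K] ga i z.2))
        (fun z => act (g'b j z.1 ⊗ₜ[K] g'a i z.2)) hrep)
    simp only [Fintype.sum_prod_type] at h2
    rw [h2, act_counit, mul_comm, mul_smul]
    rw [smul_comm]
  -- the first regrouping map (acting on the `b`-triple)
  set F : A ⊗[K] (A ⊗[K] A) →ₗ[K] A :=
    ∑ i : Fin n, ∑ ip : Fin (qa i),
      mulTri (actR act (a1 i) ∘ₗ SA) (actR act (ga i ip)) (SA ∘ₗ actR act (g'a i ip)) with hF
  have F_tmul : ∀ (x y z : A), F (x ⊗ₜ[K] (y ⊗ₜ[K] z)) =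
      ∑ i, ∑ ip, act (SA x ⊗ₜ[K] a1 i) *
        (act (y ⊗ₜ[K] ga i ip) * SA (act (z ⊗ₜ[K] g'a i ip))) := by
    intro x y z
    simp [hF, LinearMap.sum_apply]
  have claim1 : act (SA b ⊗ₜ[K] a) =
      F (∑ j, ∑ j', b1 j ⊗ₜ[K] (gb j j' ⊗ₜ[K] g'b j j')) := by
    rw [step1, map_sum]
    refine Finset.sum_congr rfl fun j _ => ?_
    rw [map_sum]
    calc ∑ i, Coalgebra.counit (R := K) (b2 j) •
            (Coalgebra.counit (R := K) (a2 i) • act (SA (b1 j) ⊗ₜ[K] a1 i))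
        = ∑ i, act (SA (b1 j) ⊗ₜ[K] a1 i) *
            (Coalgebra.counit (R := K) (b2 j) •
              (Coalgebra.counit (R := K) (a2 i) • (1 : A))) := by
          refine Finset.sum_congr rfl fun i _ => ?_
          rw [mul_smul_comm, mul_smul_comm, mul_one]
      _ = ∑ i, act (SA (b1 j) ⊗ₜ[K] a1 i) *
            (∑ j', ∑ ip, act (gb j j' ⊗ₜ[K] ga i ip) *
              SA (act (g'b j j' ⊗ₜ[K] g'a i ip))) := by
          refine Finset.sum_congr rfl fun i _ => ?_
          rw [step2 j i]
      _ = ∑ i, ∑ j', ∑ ip, act (SA (b1 j) ⊗ₜ[K] a1 i) *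
            (act (gb j j' ⊗ₜ[K] ga i ip) * SA (act (g'b j j' ⊗ₜ[K] g'a i ip))) := by
          refine Finset.sum_congr rfl fun i _ => ?_
          rw [Finset.mul_sum]
          exact Finset.sum_congr rfl fun j' _ => by rw [Finset.mul_sum]
      _ = ∑ j', ∑ i, ∑ ip, act (SA (b1 j) ⊗ₜ[K] a1 i) *
            (act (gb j j' ⊗ₜ[K] ga i ip) * SA (act (g'b j j' ⊗ₜ[K] g'a i ip))) :=
          Finset.sum_comm
      _ = ∑ j', F (b1 j ⊗ₜ[K] (gb j j' ⊗ₜ[K] g'b j j')) := by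
          refine Finset.sum_congr rfl fun j' _ => ?_
          rw [F_tmul]
  -- coassociativity on the `b` side
  have bcoassoc := Coalgebra.sum_tmul_tmul_eq (R := K) (finRepr (K := K) hb)
    (fun j => finRepr (K := K) (heb j)) (fun j => finRepr (K := K) (hgb j))
  simp only [finRepr] at bcoassoc
  rw [← bcoassoc] at claim1
  -- the second regrouping map (acting on the `a`-triple)
  set G : H ⊗[K] (H ⊗[K] H) →ₗ[K] A :=
    ∑ j : Fin m, ∑ l : Fin (pb j),
      mulTri (actL act (SA (eb j l))) (actL act (fb j l)) (SA ∘ₗ actL act (b2 j)) with hG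
  have G_tmul : ∀ (x y z : H), G (x ⊗ₜ[K] (y ⊗ₜ[K] z)) =
      ∑ j, ∑ l, act (SA (eb j l) ⊗ₜ[K] x) *
        (act (fb j l ⊗ₜ[K] y) * SA (act (b2 j ⊗ₜ[K] z))) := by
    intro x y z
    simp [hG, LinearMap.sum_apply]
  have claim3 : F (∑ j, ∑ l, eb j l ⊗ₜ[K] (fb j l ⊗ₜ[K] b2 j)) =
      G (∑ i, ∑ ip, a1 i ⊗ₜ[K] (ga i ip ⊗ₜ[K] g'a i ip)) := by
    calc F (∑ j, ∑ l, eb j l ⊗ₜ[K] (fb j l ⊗ₜ[K] b2 j))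
        = ∑ j, ∑ l, ∑ i, ∑ ip, act (SA (eb j l) ⊗ₜ[K] a1 i) *
            (act (fb j l ⊗ₜ[K] ga i ip) * SA (act (b2 j ⊗ₜ[K] g'a i ip))) := by
          rw [map_sum]
          refine Finset.sum_congr rfl fun j _ => ?_
          rw [map_sum]
          exact Finset.sum_congr rfl fun l _ => F_tmul _ _ _
      _ = ∑ j, ∑ i, ∑ l, ∑ ip, act (SA (eb j l) ⊗ₜ[K] a1 i) *
            (act (fb j l ⊗ₜ[K] ga i ip) * SA (act (b2 j ⊗ₜ[K] g'a i ip))) := by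
          exact Finset.sum_congr rfl fun j _ => Finset.sum_comm
      _ = ∑ i, ∑ j, ∑ l, ∑ ip, act (SA (eb j l) ⊗ₜ[K] a1 i) *
            (act (fb j l ⊗ₜ[K] ga i ip) * SA (act (b2 j ⊗ₜ[K] g'a i ip))) :=
          Finset.sum_comm
      _ = ∑ i, ∑ j, ∑ ip, ∑ l, act (SA (eb j l) ⊗ₜ[K] a1 i) *
            (act (fb j l ⊗ₜ[K] ga i ip) * SA (act (b2 j ⊗ₜ[K] g'a i ip))) := by
          exact Finset.sum_congr rfl fun i _ =>
            Finset.sum_congr rfl fun j _ => Finset.sum_comm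
      _ = ∑ i, ∑ ip, ∑ j, ∑ l, act (SA (eb j l) ⊗ₜ[K] a1 i) *
            (act (fb j l ⊗ₜ[K] ga i ip) * SA (act (b2 j ⊗ₜ[K] g'a i ip))) := by
          exact Finset.sum_congr rfl fun i _ => Finset.sum_comm
      _ = G (∑ i, ∑ ip, a1 i ⊗ₜ[K] (ga i ip ⊗ₜ[K] g'a i ip)) := by
          rw [map_sum]
          refine (Finset.sum_congr rfl fun i _ => ?_).symm
          rw [map_sum]
          exact Finset.sum_congr rfl fun ip _ => G_tmul _ _ _
  -- coassociativity on the `a` side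
  have acoassoc := Coalgebra.sum_tmul_tmul_eq (R := K) (finRepr (K := K) ha)
    (fun i => finRepr (K := K) (hea i)) (fun i => finRepr (K := K) (hga i))
  simp only [finRepr] at acoassoc
  rw [claim3, ← acoassoc, map_sum] at claim1
  -- final collapse
  rw [claim1]
  have final : ∀ i, G (∑ l', ea i l' ⊗ₜ[K] (fa i l' ⊗ₜ[K] a2 i)) =
      ∑ j, Coalgebra.counit (R := K) (b1 j) •
        (Coalgebra.counit (R := K) (a1 i) • SA (act (b2 j ⊗ₜ[K] a2 i))) := by
    intro i
    rw [map_sum]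
    calc ∑ l', G (ea i l' ⊗ₜ[K] (fa i l' ⊗ₜ[K] a2 i))
        = ∑ l', ∑ j, ∑ l, act (SA (eb j l) ⊗ₜ[K] ea i l') *
            (act (fb j l ⊗ₜ[K] fa i l') * SA (act (b2 j ⊗ₜ[K] a2 i))) := by
          exact Finset.sum_congr rfl fun l' _ => G_tmul _ _ _
      _ = ∑ j, ∑ l', ∑ l, act (SA (eb j l) ⊗ₜ[K] ea i l') *
            (act (fb j l ⊗ₜ[K] fa i l') * SA (act (b2 j ⊗ₜ[K] a2 i))) :=
          Finset.sum_comm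
      _ = ∑ j, ∑ l, ∑ l', act (SA (eb j l) ⊗ₜ[K] ea i l') *
            (act (fb j l ⊗ₜ[K] fa i l') * SA (act (b2 j ⊗ₜ[K] a2 i))) := by
          exact Finset.sum_congr rfl fun j _ => Finset.sum_comm
      _ = ∑ j, ∑ l, (∑ l', act (SA (eb j l) ⊗ₜ[K] ea i l') *
            act (fb j l ⊗ₜ[K] fa i l')) * SA (act (b2 j ⊗ₜ[K] a2 i)) := by
          refine Finset.sum_congr rfl fun j _ => Finset.sum_congr rfl fun l _ => ?_
          rw [Finset.sum_mul]
          exact Finset.sum_congr rfl fun l' _ => by rw [mul_assoc]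
      _ = ∑ j, ∑ l, act ((SA (eb j l) * fb j l) ⊗ₜ[K] a1 i) *
            SA (act (b2 j ⊗ₜ[K] a2 i)) := by
          refine Finset.sum_congr rfl fun j _ => Finset.sum_congr rfl fun l _ => ?_
          rw [← act_alg (SA (eb j l)) (fb j l) (a1 i) (pa i) (ea i) (fa i) (hea i)]
      _ = ∑ j, act ((∑ l, SA (eb j l) * fb j l) ⊗ₜ[K] a1 i) *
            SA (act (b2 j ⊗ₜ[K] a2 i)) := by
          refine Finset.sum_congr rfl fun j _ => ?_
          rw [sum_tmul, map_sum, Finset.sum_mul]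
      _ = ∑ j, Coalgebra.counit (R := K) (b1 j) •
            (Coalgebra.counit (R := K) (a1 i) • SA (act (b2 j ⊗ₜ[K] a2 i))) := by
          refine Finset.sum_congr rfl fun j _ => ?_
          have hs := HopfAlgebra.sum_antipode_mul_eq_smul (R := K) (finRepr (K := K) (heb j))
          simp only [finRepr] at hs
          rw [hs, ← smul_tmul', map_smul,
            one_act act act_alg act_comul act_counit (a1 i), smul_mul_assoc, smul_mul_assoc,
            one_mul]
  rw [show (∑ i, G (∑ l', ea i l' ⊗ₜ[K] (fa i l' ⊗ₜ[K] a2 i))) =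
      ∑ i, ∑ j, Coalgebra.counit (R := K) (b1 j) •
        (Coalgebra.counit (R := K) (a1 i) • SA (act (b2 j ⊗ₜ[K] a2 i))) from
    Finset.sum_congr rfl fun i _ => final i]
  -- assemble the right-hand side
  conv_rhs => rw [← sum_counit_left_smul (K := K) hb, ← sum_counit_left_smul (K := K) ha]
  rw [sum_tmul, map_sum, map_sum]
  rw [Finset.sum_comm]
  refine Finset.sum_congr rfl fun j _ => ?_
  rw [tmul_sum, map_sum, map_sum]
  refine Finset.sum_congr rfl fun i _ => ?_
  simp only [map_smul, tmul_smul, ← smul_tmul']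
  rw [smul_comm]

section Pure

variable {A : Type*} [Ring A] [HopfAlgebra K A]

/-- Gadget: `x ⊗ (y ⊗ z) ↦ (f x * g y) ⊗ z`. -/
noncomputable def duoL {M N P : Type*} [AddCommGroup M] [Module K M] [AddCommGroup N] [Module K N]
    [AddCommGroup P] [Module K P] (f : M →ₗ[K] A) (g : N →ₗ[K] A) :
    M ⊗[K] (N ⊗[K] P) →ₗ[K] A ⊗[K] P :=
  ((LinearMap.mul' K A).rTensor P) ∘ₗ (TensorProduct.assoc K A A P).symm.toLinearMap ∘ₗ
    (TensorProduct.map f (TensorProduct.map g LinearMap.id))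

@[simp] theorem duoL_tmul {M N P : Type*} [AddCommGroup M] [Module K M] [AddCommGroup N]
    [Module K N] [AddCommGroup P] [Module K P] (f : M →ₗ[K] A) (g : N →ₗ[K] A)
    (x : M) (y : N) (z : P) :
    duoL f g (x ⊗ₜ[K] (y ⊗ₜ[K] z)) = (f x * g y) ⊗ₜ[K] z := by
  simp [duoL]

/-- The key identity for a left cointegral `h` :
`(S b ⊗ 1) * Δ h = (1 ⊗ b) * Δ h`. -/
theorem left_cointegral_identity (h : A)
    (h_coint : ∀ b : A, b * h = Coalgebra.counit (R := K) b • h) (b : A) :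
    (HopfAlgebra.antipode (R := K) b ⊗ₜ[K] (1 : A)) * Coalgebra.comul (R := K) h =
      ((1 : A) ⊗ₜ[K] b) * Coalgebra.comul (R := K) h := by
  classical
  set SA : A →ₗ[K] A := HopfAlgebra.antipode (R := K) with hSA
  obtain ⟨m, p, q, hb⟩ := exists_fin_pres (K := K) (Coalgebra.comul (R := K) b)
  choose np r s hp using fun j => exists_fin_pres (K := K) (Coalgebra.comul (R := K) (p j))
  choose nq r' s' hq using fun j => exists_fin_pres (K := K) (Coalgebra.comul (R := K) (q j))
  have eval1 : ∑ j, (SA (p j) ⊗ₜ[K] (1 : A)) * Coalgebra.comul (R := K) (q j * h) =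
      (SA b ⊗ₜ[K] (1 : A)) * Coalgebra.comul (R := K) h := by
    have : ∀ j, (SA (p j) ⊗ₜ[K] (1 : A)) * Coalgebra.comul (R := K) (q j * h) =
        (Coalgebra.counit (R := K) (q j) • (SA (p j) ⊗ₜ[K] (1 : A))) *
          Coalgebra.comul (R := K) h := by
      intro j
      rw [h_coint (q j), map_smul, mul_smul_comm, smul_mul_assoc]
    rw [Finset.sum_congr rfl fun j _ => this j, ← Finset.sum_mul]
    congr 1
    conv_rhs => rw [← sum_counit_right_smul (K := K) hb]
    rw [map_sum, sum_tmul]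
    refine Finset.sum_congr rfl fun j _ => ?_
    rw [map_smul, smul_tmul']
  have eval2 : ∑ j, (SA (p j) ⊗ₜ[K] (1 : A)) * Coalgebra.comul (R := K) (q j * h) =
      ((1 : A) ⊗ₜ[K] b) * Coalgebra.comul (R := K) h := by
    have e1 : ∀ j, (SA (p j) ⊗ₜ[K] (1 : A)) * Coalgebra.comul (R := K) (q j * h) =
        ((SA (p j) ⊗ₜ[K] (1 : A)) * Coalgebra.comul (R := K) (q j)) *
          Coalgebra.comul (R := K) h := by
      intro j
      rw [Bialgebra.comul_mul, mul_assoc]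
    rw [Finset.sum_congr rfl fun j _ => e1 j, ← Finset.sum_mul]
    congr 1
    -- show  ∑ j, (SA (p j) ⊗ 1) * Δ (q j) = 1 ⊗ b
    have coas := Coalgebra.sum_tmul_tmul_eq (R := K) (finRepr (K := K) hb)
      (fun j => finRepr (K := K) (hp j)) (fun j => finRepr (K := K) (hq j))
    simp only [finRepr] at coas
    have happ := congrArg (duoL (P := A) SA (LinearMap.id (R := K) (M := A))) coas
    rw [map_sum, map_sum] at happ
    have hl : ∑ j, (duoL (P := A) SA LinearMap.id)
          (∑ l, r j l ⊗ₜ[K] (s j l ⊗ₜ[K] q j)) = (1 : A) ⊗ₜ[K] b := by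
      have : ∀ j, (duoL (P := A) SA LinearMap.id)
            (∑ l, r j l ⊗ₜ[K] (s j l ⊗ₜ[K] q j)) =
          Coalgebra.counit (R := K) (p j) • ((1 : A) ⊗ₜ[K] q j) := by
        intro j
        rw [map_sum]
        have hs := HopfAlgebra.sum_antipode_mul_eq_smul (R := K) (finRepr (K := K) (hp j))
        simp only [finRepr] at hs
        calc ∑ l, (duoL (P := A) SA LinearMap.id) (r j l ⊗ₜ[K] (s j l ⊗ₜ[K] q j))
            = ∑ l, (SA (r j l) * s j l) ⊗ₜ[K] q j := by
              exact Finset.sum_congr rfl fun l _ => by rw [duoL_tmul]; rfl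
          _ = (∑ l, SA (r j l) * s j l) ⊗ₜ[K] q j := by rw [sum_tmul]
          _ = Coalgebra.counit (R := K) (p j) • ((1 : A) ⊗ₜ[K] q j) := by
              rw [hs, smul_tmul']
      rw [Finset.sum_congr rfl fun j _ => this j]
      calc ∑ j, Coalgebra.counit (R := K) (p j) • ((1 : A) ⊗ₜ[K] q j)
          = (1 : A) ⊗ₜ[K] (∑ j, Coalgebra.counit (R := K) (p j) • q j) := by
            rw [tmul_sum]
            exact Finset.sum_congr rfl fun j _ => (tmul_smul _ _ _).symm
        _ = (1 : A) ⊗ₜ[K] b := by rw [sum_counit_left_smul (K := K) hb]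
    have hr : ∀ j, (SA (p j) ⊗ₜ[K] (1 : A)) * Coalgebra.comul (R := K) (q j) =
        (duoL (P := A) SA LinearMap.id) (∑ l, p j ⊗ₜ[K] (r' j l ⊗ₜ[K] s' j l)) := by
      intro j
      rw [map_sum, hq j, Finset.mul_sum]
      refine Finset.sum_congr rfl fun l _ => ?_
      rw [duoL_tmul, Algebra.TensorProduct.tmul_mul_tmul, one_mul]
      rfl
    rw [Finset.sum_congr rfl fun j _ => hr j, ← happ]
    exact hl
  exact eval1.symm.trans eval2

theorem basis_left_expansion {V W : Type*} [AddCommGroup V] [Module K V]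
    [AddCommGroup W] [Module K W] {ι : Type*} [Fintype ι] (B : Module.Basis ι K V)
    (z : V ⊗[K] W) : z = ∑ j, B j ⊗ₜ[K] contrL (B.coord j) z := by
  induction z using TensorProduct.induction_on with
  | zero => simp
  | tmul x y =>
      simp only [contrL_tmul]
      calc x ⊗ₜ[K] y = (∑ j, B.repr x j • B j) ⊗ₜ[K] y := by rw [B.sum_repr x]
        _ = ∑ j, B j ⊗ₜ[K] (B.coord j x • y) := by
            rw [sum_tmul]
            refine Finset.sum_congr rfl fun j _ => ?_
            rw [smul_tmul, Module.Basis.coord_apply]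
  | add z1 z2 h1 h2 =>
      conv_lhs => rw [h1, h2]
      rw [← Finset.sum_add_distrib]
      simp [tmul_add]

end Pure

end Stmt7Aux

open Stmt7Aux

/-- Let `H`, `A` be Hopf algebras over a field `K`, with `A` finite
dimensional, and let `A` be a right `H`-module *bialgebra* via `act` (compatible with
multiplication, comultiplication and counit).  If `h` is a left cointegral with
`h ◁ a = ρ(a) h` and `k` a right cointegral with `k ◁ a = η(a) k`, then `ρ = η`. -/
theorem stmt_7 (K A H : Type*) [Field K]
    [Ring A] [HopfAlgebra K A] [FiniteDimensional K A]
    [Ring H] [HopfAlgebra K H]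
    (act : A ⊗[K] H →ₗ[K] A)
    (act_one : ∀ b : A, act (b ⊗ₜ[K] 1) = b)
    (act_mul : ∀ (b : A) (a a' : H),
      act (act (b ⊗ₜ[K] a) ⊗ₜ[K] a') = act (b ⊗ₜ[K] (a * a')))
    (act_alg : ∀ (b b' : A) (a : H) (n : ℕ) (a₁ a₂ : Fin n → H),
      Coalgebra.comul (R := K) a = ∑ i, a₁ i ⊗ₜ[K] a₂ i →
      act ((b * b') ⊗ₜ[K] a) = ∑ i, act (b ⊗ₜ[K] a₁ i) * act (b' ⊗ₜ[K] a₂ i))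
    (act_comul : ∀ (b : A) (a : H) (n : ℕ) (a₁ a₂ : Fin n → H) (m : ℕ) (b₁ b₂ : Fin m → A),
      Coalgebra.comul (R := K) a = ∑ i, a₁ i ⊗ₜ[K] a₂ i →
      Coalgebra.comul (R := K) b = ∑ j, b₁ j ⊗ₜ[K] b₂ j →
      Coalgebra.comul (R := K) (act (b ⊗ₜ[K] a)) =
        ∑ j, ∑ i, act (b₁ j ⊗ₜ[K] a₁ i) ⊗ₜ[K] act (b₂ j ⊗ₜ[K] a₂ i))
    (act_counit : ∀ (b : A) (a : H),
      Coalgebra.counit (R := K) (act (b ⊗ₜ[K] a)) =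
        Coalgebra.counit (R := K) b * Coalgebra.counit (R := K) a)
    (h : A) (h_ne : h ≠ 0)
    (h_coint : ∀ b : A, b * h = Coalgebra.counit (R := K) b • h)
    (k : A) (k_ne : k ≠ 0)
    (k_coint : ∀ b : A, k * b = Coalgebra.counit (R := K) b • k)
    (ρ η : H → K)
    (hρ : ∀ a : H, act (h ⊗ₜ[K] a) = ρ a • h)
    (hη : ∀ a : H, act (k ⊗ₜ[K] a) = η a • k) :
    ρ = η := by
  classical
  set SA : A →ₗ[K] A := HopfAlgebra.antipode (R := K) with hSA
  set B : Module.Basis (Fin (Module.finrank K A)) K A := Module.finBasis K A with hB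
  set d : Fin (Module.finrank K A) → A :=
    fun j => contrL (B.coord j) (Coalgebra.comul (R := K) h) with hd
  have P1 : Coalgebra.comul (R := K) h = ∑ j, B j ⊗ₜ[K] d j :=
    basis_left_expansion (K := K) B _
  have hLI := left_cointegral_identity (K := K) h h_coint
  -- (★★) : (S k ⊗ 1) * Δ h = h ⊗ k
  have key4 : (SA k ⊗ₜ[K] (1 : A)) * Coalgebra.comul (R := K) h = h ⊗ₜ[K] k := by
    rw [hLI k, P1, Finset.mul_sum]
    have : ∀ j, ((1 : A) ⊗ₜ[K] k) * (B j ⊗ₜ[K] d j) =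
        Coalgebra.counit (R := K) (d j) • (B j ⊗ₜ[K] k) := by
      intro j
      rw [Algebra.TensorProduct.tmul_mul_tmul, one_mul, k_coint (d j), tmul_smul]
    rw [Finset.sum_congr rfl fun j _ => this j]
    calc ∑ j, Coalgebra.counit (R := K) (d j) • (B j ⊗ₜ[K] k)
        = (∑ j, Coalgebra.counit (R := K) (d j) • B j) ⊗ₜ[K] k := by
          rw [sum_tmul]
          exact Finset.sum_congr rfl fun j _ => by rw [smul_tmul']
      _ = h ⊗ₜ[K] k := by rw [sum_counit_right_smul (K := K) P1]
  -- the span of the right legs of Δ h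
  set W : Submodule K A := Submodule.span K (Set.range d) with hW
  have mem_W : ∀ j, d j ∈ W := fun j => Submodule.subset_span ⟨j, rfl⟩
  -- 6a : W is a left ideal
  have sixA : ∀ (x : A) (mm : Fin (Module.finrank K A)), x * d mm ∈ W := by
    intro x mm
    have hI := congrArg (contrL (K := K) (B.coord mm)) (hLI x)
    rw [P1, Finset.mul_sum, Finset.mul_sum, map_sum, map_sum] at hI
    have hl : ∀ j, contrL (K := K) (B.coord mm) ((SA x ⊗ₜ[K] (1 : A)) * (B j ⊗ₜ[K] d j)) =
        B.coord mm (SA x * B j) • d j := by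
      intro j
      rw [Algebra.TensorProduct.tmul_mul_tmul, one_mul, contrL_tmul]
    have hr : ∀ j, contrL (K := K) (B.coord mm) (((1 : A) ⊗ₜ[K] x) * (B j ⊗ₜ[K] d j)) =
        B.coord mm (B j) • (x * d j) := by
      intro j
      rw [Algebra.TensorProduct.tmul_mul_tmul, one_mul, contrL_tmul]
    rw [Finset.sum_congr rfl fun j _ => hl j, Finset.sum_congr rfl fun j _ => hr j] at hI
    have hcollapse : ∑ j, B.coord mm (B j) • (x * d j) = x * d mm := by
      rw [Finset.sum_eq_single mm]
      · simp
      · intro j _ hj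
        simp [Module.Basis.coord_apply, Module.Basis.repr_self, Finsupp.single_apply, hj]
      · intro hmm; exact absurd (Finset.mem_univ mm) hmm
    rw [hcollapse] at hI
    rw [← hI]
    exact Submodule.sum_mem _ fun j _ => Submodule.smul_mem _ _ (mem_W j)
  have mulW : ∀ (x : A) {w : A}, w ∈ W → x * w ∈ W := by
    intro x w hw
    induction hw using Submodule.span_induction with
    | mem y hy => obtain ⟨j, rfl⟩ := hy; exact sixA x j
    | zero => simpa using Submodule.zero_mem W
    | add y z _ _ hy hz => rw [mul_add]; exact Submodule.add_mem _ hy hz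
    | smul c y _ hy => rw [mul_smul_comm]; exact Submodule.smul_mem _ _ hy
  -- 6b : ε (d mm) • 1 ∈ W
  have sixB : ∀ mm, Coalgebra.counit (R := K) (d mm) • (1 : A) ∈ W := by
    intro mm
    choose nb Pj Qj hPQ using fun j =>
      exists_fin_pres (K := K) (Coalgebra.comul (R := K) (B j))
    choose nd Rj Sj hRS using fun j =>
      exists_fin_pres (K := K) (Coalgebra.comul (R := K) (d j))
    have coas := Coalgebra.sum_tmul_tmul_eq (R := K) (finRepr (K := K) P1)
      (fun j => finRepr (K := K) (hPQ j)) (fun j => finRepr (K := K) (hRS j))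
    simp only [finRepr] at coas
    have happ := congrArg (contrL (K := K) (B.coord mm)) coas
    rw [map_sum, map_sum] at happ
    have hrhs : ∑ j, contrL (K := K) (B.coord mm)
          (∑ l, B j ⊗ₜ[K] (Rj j l ⊗ₜ[K] Sj j l)) =
        Coalgebra.comul (R := K) (d mm) := by
      have : ∀ j, contrL (K := K) (B.coord mm) (∑ l, B j ⊗ₜ[K] (Rj j l ⊗ₜ[K] Sj j l)) =
          B.coord mm (B j) • Coalgebra.comul (R := K) (d j) := by
        intro j
        rw [map_sum, hRS j, Finset.smul_sum]
        exact Finset.sum_congr rfl fun l _ => by rw [contrL_tmul]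
      rw [Finset.sum_congr rfl fun j _ => this j, Finset.sum_eq_single mm]
      · simp
      · intro j _ hj
        simp [Module.Basis.coord_apply, Module.Basis.repr_self, Finsupp.single_apply, hj]
      · intro hmm; exact absurd (Finset.mem_univ mm) hmm
    rw [hrhs] at happ
    -- happ : ∑ j, contrL (B.coord mm) (∑ l, Pj j l ⊗ (Qj j l ⊗ d j)) = Δ (d mm)
    have hanti := HopfAlgebra.mul_antipode_rTensor_comul_apply (R := K) (a := d mm)
    rw [← happ] at hanti
    rw [Algebra.algebraMap_eq_smul_one] at hanti
    rw [← hanti]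
    simp only [map_sum]
    refine Submodule.sum_mem _ fun j _ => ?_
    refine Submodule.sum_mem _ fun l _ => ?_
    rw [contrL_tmul, smul_tmul', LinearMap.rTensor_tmul, LinearMap.mul'_apply]
    exact mulW _ (mem_W j)
  -- 6c : some ε (d mm) is nonzero
  have hsum_h : ∑ j, Coalgebra.counit (R := K) (d j) • B j = h :=
    sum_counit_right_smul (K := K) P1
  have sixC : ∃ mm, Coalgebra.counit (R := K) (d mm) ≠ 0 := by
    by_contra hc
    push_neg at hc
    apply h_ne
    rw [← hsum_h]
    simp [hc]
  -- 6d/6e : W = ⊤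
  have oneW : (1 : A) ∈ W := by
    obtain ⟨mm, hmm⟩ := sixC
    have := Submodule.smul_mem W (Coalgebra.counit (R := K) (d mm))⁻¹ (sixB mm)
    rwa [smul_smul, inv_mul_cancel₀ hmm, one_smul] at this
  have Wtop : ∀ x : A, x ∈ W := fun x => by
    simpa using mulW x oneW
  -- 7 : the d's form a basis; find f with ∑ f (d j) • B j = 1
  have spanTop : ⊤ ≤ Submodule.span K (Set.range d) := fun x _ => Wtop x
  set D : Module.Basis (Fin (Module.finrank K A)) K A :=
    basisOfTopLeSpanOfCardEqFinrank d spanTop (by simp) with hD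
  have hDcoe : ⇑D = d := coe_basisOfTopLeSpanOfCardEqFinrank d spanTop (by simp)
  set f : A →ₗ[K] K := ∑ j, B.repr 1 j • D.coord j with hf
  have hfd : ∀ mm, f (d mm) = B.repr 1 mm := by
    intro mm
    rw [hf]
    simp only [LinearMap.sum_apply, LinearMap.smul_apply, Module.Basis.coord_apply]
    rw [Finset.sum_eq_single mm]
    · rw [← hDcoe, Module.Basis.repr_self]; simp
    · intro j _ hj
      rw [← hDcoe, Module.Basis.repr_self]
      simp [Finsupp.single_apply, Ne.symm hj]
    · intro hmm; exact absurd (Finset.mem_univ mm) hmm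
  have hf1 : ∑ j, f (d j) • B j = (1 : A) := by
    rw [Finset.sum_congr rfl fun j _ => by rw [hfd j]]
    exact B.sum_repr 1
  -- 8 : S k = f k • h
  have key8 : SA k = f k • h := by
    have hc := congrArg (contrR (K := K) f) key4
    rw [contrR_tmul] at hc
    rw [P1, Finset.mul_sum, map_sum] at hc
    have : ∀ j, contrR (K := K) f ((SA k ⊗ₜ[K] (1 : A)) * (B j ⊗ₜ[K] d j)) =
        SA k * (f (d j) • B j) := by
      intro j
      rw [Algebra.TensorProduct.tmul_mul_tmul, one_mul, contrR_tmul, mul_smul_comm]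
    rw [Finset.sum_congr rfl fun j _ => this j, ← Finset.mul_sum, hf1, mul_one] at hc
    exact hc
  -- 9 : S k ≠ 0
  have hSk_ne : SA k ≠ 0 := by
    intro h0
    rw [h0] at key4
    have : h ⊗ₜ[K] k = 0 := by
      rw [← key4, TensorProduct.zero_tmul, zero_mul]
    obtain ⟨jj, hjj⟩ : ∃ jj, B.repr h jj ≠ 0 := by
      by_contra hc
      push_neg at hc
      apply h_ne
      have := B.sum_repr h
      rw [Finset.sum_congr rfl fun j _ => by rw [hc j]] at this
      simpa using this.symm
    have hcl := congrArg (contrL (K := K) (B.coord jj)) this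
    rw [contrL_tmul, map_zero, Module.Basis.coord_apply] at hcl
    rcases smul_eq_zero.1 hcl with hz | hz
    · exact hjj hz
    · exact k_ne hz
  have hfk_ne : f k ≠ 0 := by
    intro h0
    apply hSk_ne
    rw [key8, h0, zero_smul]
  -- 11 : conclude
  funext a
  have e1 : act (SA k ⊗ₜ[K] a) = η a • SA k := by
    rw [antipode_act (K := K) act act_alg act_comul act_counit k a, hη a, map_smul]
  have e2 : act (SA k ⊗ₜ[K] a) = ρ a • SA k := by
    rw [key8, ← smul_tmul', map_smul, hρ a, smul_comm]
  have : (ρ a - η a) • SA k = 0 := by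
    rw [sub_smul, ← e1, ← e2, sub_self]
  rcases smul_eq_zero.1 this with hz | hz
  · exact sub_eq_zero.1 hz
  · exact absurd hz hSk_ne
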